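/- Let d ≥ 1 be an integer, N ∈ ℝ, and ℓ_1, …, ℓ_{d+1} ∈ ℝ. For every pair of distinct indices i, j ∈ {1,…,d+1} and every n ∈ ℕ_0: if f ∈ ℝ[x_1,…,x_d] is a polynomial of total degree at most n, then the function x ↦ (L_{i,j}f)(x) coincides on ℤ^d with a polynomial of total degree at most n; that is, L_{i,j} maps Π_n^d into Π_n^d. -/

import Mathlib

open Finset MvPolynomial

/-- Extended coordinate: `x_k` for `k ≤ d` and `x_{d+1} = N - |x|`. -/
def coordExt (d : ℕ) (N : ℝ) (x : Fin d → ℤ) (k : Fin (d + 1)) : ℝ :=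
  if h : (k : ℕ) < d then (x ⟨k, h⟩ : ℝ) else N - ∑ i, (x i : ℝ)

/-- The shift vector: `e_k` for `k ≤ d`, and `0` for `k = d+1`. -/
def shiftVec (d : ℕ) (k : Fin (d + 1)) : Fin d → ℤ :=
  if h : (k : ℕ) < d then Pi.single ⟨k, h⟩ 1 else 0

/-- The operator `L_{i,j}`, for `i ≠ j ∈ {1,…,d+1}`. -/
def Lop (d : ℕ) (N : ℝ) (ℓ : Fin (d + 1) → ℝ) (i j : Fin (d + 1))
    (f : (Fin d → ℤ) → ℝ) : (Fin d → ℤ) → ℝ := fun x =>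
  coordExt d N x j * (coordExt d N x i - ℓ i) *
      (f (x + shiftVec d i - shiftVec d j) - f x) +
    coordExt d N x i * (coordExt d N x j - ℓ j) *
      (f (x + shiftVec d j - shiftVec d i) - f x)

/-- The shift (translation) operator on polynomials. -/
noncomputable def Sh {d : ℕ} (a : Fin d → ℝ) :
    MvPolynomial (Fin d) ℝ →ₐ[ℝ] MvPolynomial (Fin d) ℝ :=
  aeval (fun t => X t + C (a t))

lemma Sh_C {d : ℕ} (a : Fin d → ℝ) (c : ℝ) : Sh a (C c) = C c := by simp [Sh]

lemma Sh_X {d : ℕ} (a : Fin d → ℝ) (i : Fin d) : Sh a (X i) = X i + C (a i) := by simp [Sh]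

lemma eval_Sh {d : ℕ} (a : Fin d → ℝ) (f : MvPolynomial (Fin d) ℝ) (x : Fin d → ℝ) :
    eval x (Sh a f) = eval (fun t => x t + a t) f := by
  induction f using MvPolynomial.induction_on with
  | C c => simp [Sh_C]
  | add p q hp hq => simp [map_add, hp, hq]
  | mul_X p i hp => simp [map_mul, hp, Sh_X]

lemma Sh_neg_Sh {d : ℕ} (a : Fin d → ℝ) (f : MvPolynomial (Fin d) ℝ) :
    Sh (-a) (Sh a f) = f := by
  induction f using MvPolynomial.induction_on with
  | C c => simp [Sh_C]
  | add p q hp hq => simp [map_add, hp, hq]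
  | mul_X p i hp => simp [map_mul, hp, Sh_X, map_add, Sh_C]

lemma totalDegree_natCast' {d : ℕ} (k : ℕ) :
    (k : MvPolynomial (Fin d) ℝ).totalDegree = 0 := by
  rw [← C_eq_coe_nat]; exact totalDegree_C _

lemma pow_sub_pow_deg {d : ℕ} (i : Fin d) (c : ℝ) (k : ℕ) :
    ((X i + C c) ^ k - X i ^ k : MvPolynomial (Fin d) ℝ).totalDegree ≤ k - 1 := by
  have h : ((X i + C c) ^ k : MvPolynomial (Fin d) ℝ) =
      (∑ m ∈ Finset.range k, X i ^ m * C c ^ (k - m) * (k.choose m : MvPolynomial (Fin d) ℝ))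
        + X i ^ k := by
    rw [add_pow, Finset.sum_range_succ]
    simp
  rw [h, add_sub_cancel_right]
  refine (totalDegree_finset_sum _ _).trans (Finset.sup_le fun m hm => ?_)
  have hm' : m + 1 ≤ k := Finset.mem_range.1 hm
  have h1 : (X i ^ m : MvPolynomial (Fin d) ℝ).totalDegree ≤ m := by
    calc (X i ^ m : MvPolynomial (Fin d) ℝ).totalDegree
        ≤ m * (X i : MvPolynomial (Fin d) ℝ).totalDegree := totalDegree_pow _ _
      _ = m := by rw [totalDegree_X]; ring
  have h2 : ((C c : MvPolynomial (Fin d) ℝ) ^ (k - m)).totalDegree = 0 := by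
    rw [← C_pow, totalDegree_C]
  have h3 := totalDegree_natCast' (d := d) (k.choose m)
  have h4 := totalDegree_mul (X i ^ m * C c ^ (k - m)) ((k.choose m : MvPolynomial (Fin d) ℝ))
  have h5 := totalDegree_mul (X i ^ m) ((C c : MvPolynomial (Fin d) ℝ) ^ (k - m))
  omega

lemma Sh_monomial_sub {d : ℕ} (a : Fin d → ℝ) (s : Fin d →₀ ℕ) :
    (Sh a (monomial s 1) - monomial s 1).totalDegree ≤ (s.sum fun _ e => e) - 1 := by
  induction s using Finsupp.induction with
  | zero => rw [monomial_zero', Sh_C, sub_self, totalDegree_zero]; exact Nat.zero_le _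
  | single_add i k s' hi hk ih =>
    have hM : (monomial (Finsupp.single i k + s') (1 : ℝ) : MvPolynomial (Fin d) ℝ)
        = X i ^ k * monomial s' 1 := by
      rw [X_pow_eq_monomial, monomial_mul, one_mul]
    have hsum : ((Finsupp.single i k + s').sum fun _ e => e)
        = k + (s'.sum fun _ e => e) := by
      rw [Finsupp.sum_add_index' (fun _ => rfl) (fun _ _ _ => rfl), Finsupp.sum_single_index rfl]
    set M : MvPolynomial (Fin d) ℝ := monomial s' 1 with hMdef
    set P : MvPolynomial (Fin d) ℝ := Sh a M with hPdef
    have hsplit : Sh a (monomial (Finsupp.single i k + s') (1:ℝ))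
        - monomial (Finsupp.single i k + s') (1:ℝ)
        = ((X i + C (a i)) ^ k - X i ^ k) * P + X i ^ k * (P - M) := by
      rw [hM, map_mul, map_pow, Sh_X]; ring
    rw [hsplit, hsum]
    have hdM : M.totalDegree = s'.sum fun _ e => e := totalDegree_monomial _ one_ne_zero
    have hdP : P.totalDegree ≤ s'.sum fun _ e => e := by
      have : P = (P - M) + M := by ring
      rw [this]
      refine (totalDegree_add _ _).trans (max_le (ih.trans ?_) hdM.le)
      omega
    have hXk : ((X i : MvPolynomial (Fin d) ℝ) ^ k).totalDegree ≤ k := by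
      calc ((X i : MvPolynomial (Fin d) ℝ) ^ k).totalDegree
          ≤ k * (X i : MvPolynomial (Fin d) ℝ).totalDegree := totalDegree_pow _ _
        _ = k := by rw [totalDegree_X]; ring
    have h1 : (((X i + C (a i)) ^ k - X i ^ k) * P).totalDegree
        ≤ (k - 1) + (s'.sum fun _ e => e) :=
      (totalDegree_mul _ _).trans (add_le_add (pow_sub_pow_deg i (a i) k) hdP)
    have h2 : ((X i : MvPolynomial (Fin d) ℝ) ^ k * (P - M)).totalDegree
        ≤ k + (s'.sum fun _ e => e) - 1 := by
      by_cases hD : P - M = 0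
      · rw [hD, mul_zero, totalDegree_zero]; exact Nat.zero_le _
      · have hs' : s' ≠ 0 := by
          intro h
          apply hD
          rw [hPdef, hMdef, h, monomial_zero', Sh_C, sub_self]
        have hpos : 0 < s'.sum fun _ e => e := by
          rcases Finsupp.ne_iff.1 hs' with ⟨j, hj⟩
          have hjs : j ∈ s'.support := Finsupp.mem_support_iff.2 (by simpa using hj)
          have h6 : s' j ≤ s'.sum fun _ e => e :=
            Finset.single_le_sum (fun _ _ => Nat.zero_le _) hjs
          have : 0 < s' j := Nat.pos_of_ne_zero (by simpa using hj)
          omega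
        have := (totalDegree_mul ((X i : MvPolynomial (Fin d) ℝ) ^ k) (P - M)).trans
          (add_le_add hXk ih)
        omega
    refine (totalDegree_add _ _).trans (max_le (h1.trans ?_) h2)
    omega

lemma diff_deg {d : ℕ} (a : Fin d → ℝ) (f : MvPolynomial (Fin d) ℝ) {m : ℕ}
    (h : f.totalDegree ≤ m + 1) : (Sh a f - f).totalDegree ≤ m := by
  have hrep : Sh a f - f
      = ∑ s ∈ f.support, (coeff s f) • (Sh a (monomial s 1) - monomial s 1) := by
    conv_lhs => rw [f.as_sum]
    rw [map_sum, ← Finset.sum_sub_distrib]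
    refine Finset.sum_congr rfl fun s hs => ?_
    rw [smul_sub, ← map_smul, smul_monomial, smul_eq_mul, mul_one]
  rw [hrep]
  refine (totalDegree_finset_sum _ _).trans (Finset.sup_le fun s hs => ?_)
  have h1 := (totalDegree_smul_le (coeff s f) _).trans (Sh_monomial_sub a s)
  have h2 : (s.sum fun _ e => e) ≤ m + 1 := (le_totalDegree hs).trans h
  omega

lemma eq_C_of_deg_zero {d : ℕ} (p : MvPolynomial (Fin d) ℝ) (h : p.totalDegree ≤ 0) :
    p = C (coeff 0 p) := by
  have h0 : p.totalDegree = 0 := Nat.le_zero.1 h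
  have hall := (totalDegree_eq_zero_iff (Fin d) p).1 h0
  ext m
  rcases eq_or_ne m 0 with rfl | hm
  · simp
  · have hns : m ∉ p.support := by
      intro hmem
      exact hm (Finsupp.ext fun x => hall m hmem x)
    rw [MvPolynomial.notMem_support_iff.1 hns, coeff_C, if_neg (Ne.symm hm)]

/-- `L_{i,j}` maps `Π_n^d` into `Π_n^d`: applied to (the evaluation of) a polynomial of
total degree at most `n`, it coincides on `ℤ^d` with a polynomial of total degree at
most `n`. -/
theorem stmt7 (d : ℕ) (hd : 1 ≤ d) (N : ℝ) (ℓ : Fin (d + 1) → ℝ)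
    (i j : Fin (d + 1)) (hij : i ≠ j) (n : ℕ)
    (f : MvPolynomial (Fin d) ℝ) (hf : f.totalDegree ≤ n) :
    ∃ g : MvPolynomial (Fin d) ℝ, g.totalDegree ≤ n ∧
      ∀ x : Fin d → ℤ,
        Lop d N ℓ i j (fun y => eval (fun t => (y t : ℝ)) f) x =
          eval (fun t => (x t : ℝ)) g := by
  classical
  -- degree-one polynomials representing the extended coordinates
  set p : Fin (d + 1) → MvPolynomial (Fin d) ℝ :=
    fun k => if h : (k : ℕ) < d then X ⟨k, h⟩ else C N - ∑ t, X t with hpdef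
  have hpdeg : ∀ k, (p k).totalDegree ≤ 1 := by
    intro k
    rw [hpdef]
    dsimp only
    split
    · exact (totalDegree_X _).le
    · refine (totalDegree_sub _ _).trans (max_le ?_ ?_)
      · rw [totalDegree_C]; omega
      · exact (totalDegree_finset_sum _ _).trans
          (Finset.sup_le fun t _ => (totalDegree_X t).le)
  have hpeval : ∀ (x : Fin d → ℤ) (k : Fin (d + 1)),
      eval (fun t => (x t : ℝ)) (p k) = coordExt d N x k := by
    intro x k
    rw [hpdef, coordExt]
    dsimp only
    split
    · simp
    · simp
  -- the real shift vector
  set a : Fin d → ℝ := fun t => ((shiftVec d i t : ℤ) : ℝ) - ((shiftVec d j t : ℤ) : ℝ)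
    with hadef
  have hxa : ∀ x : Fin d → ℤ,
      (fun t => (((x + shiftVec d i - shiftVec d j) t : ℤ) : ℝ))
        = fun t => (x t : ℝ) + a t := by
    intro x; funext t
    rw [hadef]
    dsimp only [Pi.add_apply, Pi.sub_apply]
    push_cast
    ring
  have hxa' : ∀ x : Fin d → ℤ,
      (fun t => (((x + shiftVec d j - shiftVec d i) t : ℤ) : ℝ))
        = fun t => (x t : ℝ) + (-a) t := by
    intro x; funext t
    rw [hadef]
    dsimp only [Pi.add_apply, Pi.sub_apply, Pi.neg_apply]
    push_cast
    ring
  set u : MvPolynomial (Fin d) ℝ := Sh a f - f with hudef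
  set v : MvPolynomial (Fin d) ℝ := Sh (-a) f - f with hvdef
  have huv : u + v = -(Sh (-a) u - u) := by
    rw [hudef, hvdef, map_sub, Sh_neg_Sh]
    ring
  set Q1 : MvPolynomial (Fin d) ℝ := p j * (p i - C (ℓ i)) with hQ1def
  set R : MvPolynomial (Fin d) ℝ := C (ℓ i) * p j - C (ℓ j) * p i with hRdef
  refine ⟨Q1 * (u + v) + R * v, ?_, ?_⟩
  · -- total degree bound
    have hQ1d : Q1.totalDegree ≤ 2 := by
      refine (totalDegree_mul _ _).trans ?_
      have := hpdeg j
      have h2 : (p i - C (ℓ i)).totalDegree ≤ 1 :=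
        (totalDegree_sub _ _).trans (max_le (hpdeg i) (by rw [totalDegree_C]; omega))
      omega
    have hRd : R.totalDegree ≤ 1 := by
      refine (totalDegree_sub _ _).trans (max_le ?_ ?_) <;>
        refine (totalDegree_mul _ _).trans ?_
      · have := hpdeg j; rw [totalDegree_C]; omega
      · have := hpdeg i; rw [totalDegree_C]; omega
    by_cases hf0 : f.totalDegree = 0
    · have hfC : f = C (coeff 0 f) := eq_C_of_deg_zero f hf0.le
      have hu0 : u = 0 := by rw [hudef, hfC, Sh_C, sub_self]
      have hv0 : v = 0 := by rw [hvdef, hfC, Sh_C, sub_self]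
      rw [hu0, hv0]
      simp
    · have hn1 : 1 ≤ n := by
        rcases Nat.eq_zero_or_pos n with rfl | h
        · exact absurd (Nat.le_zero.1 hf) hf0
        · exact h
      have hud : u.totalDegree ≤ n - 1 := diff_deg a f (by omega)
      have hvd : v.totalDegree ≤ n - 1 := diff_deg (-a) f (by omega)
      have hRv : (R * v).totalDegree ≤ n :=
        (totalDegree_mul _ _).trans (by omega)
      by_cases hu0 : u.totalDegree = 0
      · have hCu : u = C (coeff 0 u) := eq_C_of_deg_zero u hu0.le
        have hShu : Sh (-a) u = u := by rw [hCu, Sh_C]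
        have huv0 : u + v = 0 := by rw [huv, hShu, sub_self, neg_zero]
        rw [huv0, mul_zero, zero_add]
        exact hRv
      · have hn2 : 2 ≤ n := by
          have := Nat.pos_of_ne_zero hu0
          omega
        have huvd : (u + v).totalDegree ≤ n - 2 := by
          rw [huv, totalDegree_neg]
          exact diff_deg (-a) u (by omega)
        refine (totalDegree_add _ _).trans (max_le ?_ hRv)
        refine (totalDegree_mul _ _).trans ?_
        omega
  · -- evaluation identity
    intro x
    simp only [Lop]
    rw [hxa x, hxa' x, ← eval_Sh, ← eval_Sh, ← hpeval x i, ← hpeval x j]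
    rw [hudef, hvdef, hQ1def, hRdef]
    simp only [map_add, map_mul, map_sub, eval_C]
    ring
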